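/- Let A be a hyperbolic linear automorphism of ℝ^d with invariant splitting ℝ^d = E⁻ ⊕ E⁺, projections π₊, π₋, and suppose ‖A w‖ ≥ 2‖w‖ for w ∈ E⁺ and ‖A w‖ ≤ (1/2)‖w‖ for w ∈ E⁻. Let η ∈ (0,1/3) and suppose (v_n)_{n≥0} is a sequence in ℝ^d satisfying ‖v_{n+1} − A v_n‖ ≤ η‖v_n‖ for all n, and suppose that the quantity max(‖π₊ v_n‖, ‖π₋ v_n‖) attains a maximum over all n at n = 0, with ‖π₊ v_0‖ ≥ ‖π₋ v_0‖. Then v_0 = 0. -/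

import Mathlib

/-- The hyperbolic maximum-principle: if a sequence `(vₙ)` satisfies
`‖v_{n+1} − A vₙ‖ ≤ η‖vₙ‖` with `η ∈ (0,1/3)`, where `A` expands the unstable
projection by `2` and contracts the stable projection by `1/2`, and the quantity
`max(‖π₊ vₙ‖, ‖π₋ vₙ‖)` is maximized at `n = 0` with `‖π₊ v₀‖ ≥ ‖π₋ v₀‖`,
then `v₀ = 0`. -/
theorem stmt7 (d : ℕ) (hd : 0 < d)
    (A πp πm : (Fin d → ℝ) →ₗ[ℝ] (Fin d → ℝ))
    (hsum : ∀ v, πp v + πm v = v)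
    (hidemp : πp ∘ₗ πp = πp) (hidemm : πm ∘ₗ πm = πm)
    (hcommp : A ∘ₗ πp = πp ∘ₗ A) (hcommm : A ∘ₗ πm = πm ∘ₗ A)
    (hnormp : ∀ v, ‖πp v‖ ≤ ‖v‖) (hnormm : ∀ v, ‖πm v‖ ≤ ‖v‖)
    (hexp : ∀ v, 2 * ‖πp v‖ ≤ ‖A (πp v)‖)
    (hcontr : ∀ v, ‖A (πm v)‖ ≤ (1/2) * ‖πm v‖)
    (η : ℝ) (hη : η ∈ Set.Ioo (0 : ℝ) (1/3))
    (v : ℕ → (Fin d → ℝ))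
    (hrec : ∀ n, ‖v (n+1) - A (v n)‖ ≤ η * ‖v n‖)
    (hmax : ∀ n, max ‖πp (v n)‖ ‖πm (v n)‖ ≤ max ‖πp (v 0)‖ ‖πm (v 0)‖)
    (hpm : ‖πm (v 0)‖ ≤ ‖πp (v 0)‖) :
    v 0 = 0 := by
  obtain ⟨hη0, hη1⟩ := hη
  set M := ‖πp (v 0)‖ with hM
  have hv0 : ‖v 0‖ ≤ 2 * M := by
    calc ‖v 0‖ = ‖πp (v 0) + πm (v 0)‖ := by rw [hsum]
    _ ≤ ‖πp (v 0)‖ + ‖πm (v 0)‖ := norm_add_le _ _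
    _ ≤ 2 * M := by linarith
  have hcomm : πp (A (v 0)) = A (πp (v 0)) := by
    have := LinearMap.congr_fun hcommp (v 0)
    simpa using this.symm
  have key : 2 * M ≤ ‖A (πp (v 0))‖ := hexp (v 0)
  have h1 : ‖A (πp (v 0))‖ ≤ ‖πp (v 1)‖ + ‖πp (v 1 - A (v 0))‖ := by
    have heq : A (πp (v 0)) = πp (v 1) - πp (v 1 - A (v 0)) := by
      rw [map_sub, hcomm]; abel
    rw [heq]; exact norm_sub_le _ _
  have h2 : ‖πp (v 1 - A (v 0))‖ ≤ η * ‖v 0‖ := (hnormp _).trans (hrec 0)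
  have h3 : ‖πp (v 1)‖ ≤ M := le_trans (le_max_left _ _) (by have h := hmax 1; rw [max_eq_left hpm] at h; exact h)
  have hM0 : M ≤ 0 := by nlinarith [norm_nonneg (v 0), norm_nonneg (πp (v 0))]
  have hMp : ‖πp (v 0)‖ = 0 := le_antisymm hM0 (norm_nonneg _)
  have hMm : ‖πm (v 0)‖ = 0 := le_antisymm (hpm.trans hM0) (norm_nonneg _)
  have : v 0 = πp (v 0) + πm (v 0) := (hsum _).symm
  rw [this, norm_eq_zero.mp hMp, norm_eq_zero.mp hMm, add_zero]
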